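/- Let G be a graph, G' be obtained from G by attaching a pendant vertex to every vertex of G, and suppose (Ũ_in, Ũ_ex) is a feasible pre-assignment of G' under the Mixed model with Ũ_in ∪ Ũ_ex ⊆ V(G). Then V(G) = Ũ_in ∪ Ũ_ex ∪ N_G(Ũ_ex). -/

import Mathlib

variable {V : Type*} [Fintype V] [DecidableEq V]

/-- `C` is a vertex cover of `G`: every edge has an endpoint in `C`. -/
def IsVertexCover (G : SimpleGraph V) (C : Finset V) : Prop :=
  ∀ ⦃u v : V⦄, G.Adj u v → u ∈ C ∨ v ∈ C

/-- `C` is a minimum vertex cover of `G`. -/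
def IsMinVertexCover (G : SimpleGraph V) (C : Finset V) : Prop :=
  IsVertexCover G C ∧ ∀ D : Finset V, IsVertexCover G D → C.card ≤ D.card

/-- The vertex cover number τ(G). -/
noncomputable def tau (G : SimpleGraph V) : ℕ :=
  sInf {n : ℕ | ∃ C : Finset V, IsVertexCover G C ∧ C.card = n}

/-- `I` is an independent set of `G`. -/
def IsIndepSet (G : SimpleGraph V) (I : Finset V) : Prop :=
  ∀ u ∈ I, ∀ v ∈ I, ¬ G.Adj u v

/-- `D` is a dominating set of `G`. -/
def IsDomSet (G : SimpleGraph V) (D : Finset V) : Prop :=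
  ∀ v : V, v ∈ D ∨ ∃ u ∈ D, G.Adj u v

/-- N(X): vertices outside `X` adjacent to some vertex of `X`. -/
def NFinset (G : SimpleGraph V) [DecidableRel G.Adj] (X : Finset V) : Finset V :=
  (X.biUnion fun v => G.neighborFinset v) \ X

/-- `C` is a vertex cover of the induced subgraph `G - S` (vertices outside `S`). -/
def IsVCOutside (G : SimpleGraph V) (S C : Finset V) : Prop :=
  Disjoint C S ∧ ∀ ⦃u v : V⦄, G.Adj u v → u ∉ S → v ∉ S → u ∈ C ∨ v ∈ C

/-- `C` is a minimum vertex cover of the induced subgraph `G - S`. -/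
def IsMinVCOutside (G : SimpleGraph V) (S C : Finset V) : Prop :=
  IsVCOutside G S C ∧ ∀ D : Finset V, IsVCOutside G S D → C.card ≤ D.card

/-- Feasibility under the Include model. -/
def FeasibleInclude (G : SimpleGraph V) (U : Finset V) : Prop :=
  ∃! C : Finset V, IsMinVertexCover G C ∧ U ⊆ C

/-- Feasibility under the Exclude model. -/
def FeasibleExclude (G : SimpleGraph V) (U : Finset V) : Prop :=
  ∃! C : Finset V, IsMinVertexCover G C ∧ Disjoint C U

/-- Feasibility under the Mixed model. -/
def FeasibleMixed (G : SimpleGraph V) (Uin Uex : Finset V) : Prop :=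
  ∃! C : Finset V, IsMinVertexCover G C ∧ Uin ⊆ C ∧ Disjoint C Uex

/-- The graph `G'` obtained by attaching a pendant vertex `Sum.inr v`
to each vertex `Sum.inl v` of `G`. -/
def pendant (G : SimpleGraph V) : SimpleGraph (V ⊕ V) where
  Adj x y :=
    match x, y with
    | Sum.inl u, Sum.inl v => G.Adj u v
    | Sum.inl u, Sum.inr v => u = v
    | Sum.inr u, Sum.inl v => u = v
    | Sum.inr _, Sum.inr _ => False
  symm := ⟨by
    rintro (u | u) (v | v) h
    · exact h.symm
    · exact h.symm
    · exact h.symm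
    · exact h⟩
  loopless := ⟨by
    rintro (u | u) h
    · exact G.irrefl h
    · exact h⟩

/-- Lift a vertex cover `S` of `G` to a candidate minimum vertex cover of `pendant G`. -/
def pendLift (S : Finset V) : Finset (V ⊕ V) :=
  S.image Sum.inl ∪ Sᶜ.image Sum.inr

lemma mem_pendLift_inl (S : Finset V) (v : V) :
    Sum.inl v ∈ pendLift S ↔ v ∈ S := by
  simp [pendLift]

lemma pendLift_card (S : Finset V) : (pendLift S).card = Fintype.card V := by
  classical
  have hdisj : Disjoint (S.image Sum.inl) (Sᶜ.image (Sum.inr : V → V ⊕ V)) := by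
    simp [Finset.disjoint_left]
  rw [pendLift, Finset.card_union_of_disjoint hdisj,
    Finset.card_image_of_injective _ Sum.inl_injective,
    Finset.card_image_of_injective _ Sum.inr_injective,
    Finset.card_add_card_compl]

lemma pendant_cover_card (G : SimpleGraph V) (D : Finset (V ⊕ V))
    (hD : IsVertexCover (pendant G) D) : Fintype.card V ≤ D.card := by
  classical
  set f : V → V ⊕ V := fun v => if Sum.inl v ∈ D then Sum.inl v else Sum.inr v with hf
  have hmem : ∀ v ∈ (Finset.univ : Finset V), f v ∈ D := by
    intro v _
    by_cases hv : Sum.inl v ∈ D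
    · simpa [hf, hv]
    · have hadj : (pendant G).Adj (Sum.inl v) (Sum.inr v) := rfl
      rcases hD hadj with h' | h'
      · exact absurd h' hv
      · simpa [hf, hv]
  have hinj : Set.InjOn f (Finset.univ : Finset V) := by
    intro a _ b _ hab
    simp only [hf] at hab
    split_ifs at hab <;>
      first
      | exact Sum.inl_injective hab
      | exact Sum.inr_injective hab
      | simp at hab
  simpa using Finset.card_le_card_of_injOn f hmem hinj

lemma pendLift_cover (G : SimpleGraph V) (S : Finset V) (hS : IsVertexCover G S) :
    IsVertexCover (pendant G) (pendLift S) := by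
  rintro (u | u) (v | v) hadj
  · rcases hS hadj with h | h
    · exact Or.inl (by simp [pendLift, h])
    · exact Or.inr (by simp [pendLift, h])
  · have huv : u = v := hadj
    subst huv
    by_cases hu : u ∈ S
    · exact Or.inl (by simp [pendLift, hu])
    · exact Or.inr (by simp [pendLift, hu])
  · have huv : u = v := hadj
    subst huv
    by_cases hu : u ∈ S
    · exact Or.inr (by simp [pendLift, hu])
    · exact Or.inl (by simp [pendLift, hu])
  · exact absurd hadj (by simp [pendant])

lemma pendLift_good (G : SimpleGraph V) (Uin Uex S : Finset V)
    (hS : IsVertexCover G S) (hin : Uin ⊆ S) (hex : Disjoint S Uex) :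
    IsMinVertexCover (pendant G) (pendLift S) ∧
      Uin.image Sum.inl ⊆ pendLift S ∧
      Disjoint (pendLift S) (Uex.image Sum.inl) := by
  refine ⟨⟨pendLift_cover G S hS, ?_⟩, ?_, ?_⟩
  · intro D hD
    rw [pendLift_card]
    exact pendant_cover_card G D hD
  · intro x hx
    simp only [Finset.mem_image] at hx
    obtain ⟨a, ha, rfl⟩ := hx
    simpa [mem_pendLift_inl] using hin ha
  · rw [Finset.disjoint_right]
    intro x hx
    simp only [Finset.mem_image] at hx
    obtain ⟨a, ha, rfl⟩ := hx
    rw [mem_pendLift_inl]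
    exact Finset.disjoint_right.mp hex ha

/-- if (Ũin, Ũex) ⊆ V(G) is Mixed-feasible for G', then
V(G) = Ũin ∪ Ũex ∪ N_G(Ũex). -/
theorem stmt11 (G : SimpleGraph V) [DecidableRel G.Adj] (Uin Uex : Finset V)
    (h : FeasibleMixed (pendant G) (Uin.image Sum.inl) (Uex.image Sum.inl)) :
    Finset.univ = Uin ∪ Uex ∪ NFinset G Uex := by
  classical
  obtain ⟨C, ⟨hCmin, hCin, hCex⟩, hUniq⟩ := h
  -- Uex is independent in G
  have hindep : ∀ u ∈ Uex, ∀ w ∈ Uex, ¬ G.Adj u w := by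
    intro u hu w hw hadj
    have : (pendant G).Adj (Sum.inl u) (Sum.inl w) := hadj
    rcases hCmin.1 this with hmem | hmem
    · exact Finset.disjoint_left.mp hCex hmem (Finset.mem_image_of_mem _ hu)
    · exact Finset.disjoint_left.mp hCex hmem (Finset.mem_image_of_mem _ hw)
  -- Uin ∩ Uex = ∅
  have hinex : ∀ u ∈ Uin, u ∉ Uex := by
    intro u hu hu'
    exact Finset.disjoint_left.mp hCex (hCin (Finset.mem_image_of_mem _ hu))
      (Finset.mem_image_of_mem _ hu')
  ext v
  simp only [Finset.mem_univ, true_iff, Finset.mem_union]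
  by_contra hv
  push_neg at hv
  obtain ⟨⟨hvin, hvex⟩, hvN⟩ := hv
  have hvN' : ∀ u ∈ Uex, ¬ G.Adj u v := by
    intro u hu hadj
    exact hvN (by
      simp only [NFinset, Finset.mem_sdiff, Finset.mem_biUnion]
      exact ⟨⟨u, hu, by simpa using hadj⟩, hvex⟩)
  set S1 : Finset V := Uexᶜ with hS1
  set S2 : Finset V := S1.erase v with hS2
  have hcov1 : IsVertexCover G S1 := by
    intro a b hadj
    by_contra hab
    push_neg at hab
    have ha : a ∈ Uex := by simpa [hS1] using hab.1
    have hb : b ∈ Uex := by simpa [hS1] using hab.2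
    exact hindep a ha b hb hadj
  have hcov2 : IsVertexCover G S2 := by
    intro a b hadj
    by_contra hab
    push_neg at hab
    have ha : a ∈ Uex ∨ a = v := by
      rcases hab with ⟨ha, _⟩
      simp only [hS2, Finset.mem_erase, hS1, Finset.mem_compl] at ha
      by_cases h1 : a = v
      · exact Or.inr h1
      · by_cases h2 : a ∈ Uex
        · exact Or.inl h2
        · exact absurd ⟨h1, h2⟩ ha
    have hb : b ∈ Uex ∨ b = v := by
      rcases hab with ⟨_, hb⟩
      simp only [hS2, Finset.mem_erase, hS1, Finset.mem_compl] at hb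
      by_cases h1 : b = v
      · exact Or.inr h1
      · by_cases h2 : b ∈ Uex
        · exact Or.inl h2
        · exact absurd ⟨h1, h2⟩ hb
    rcases ha with ha | rfl <;> rcases hb with hb | rfl
    · exact hindep a ha b hb hadj
    · exact hvN' a ha hadj
    · exact hvN' b hb hadj.symm
    · exact G.irrefl hadj
  have hsub1 : Uin ⊆ S1 := by
    intro u hu
    simpa [hS1] using hinex u hu
  have hsub2 : Uin ⊆ S2 := by
    intro u hu
    simp only [hS2, Finset.mem_erase]
    exact ⟨fun huv => hvin (huv ▸ hu), hsub1 hu⟩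
  have hdis1 : Disjoint S1 Uex := by
    rw [Finset.disjoint_left]
    intro a ha
    simpa [hS1] using ha
  have hdis2 : Disjoint S2 Uex :=
    Finset.disjoint_of_subset_left (Finset.erase_subset _ _) hdis1
  have h1 := pendLift_good G Uin Uex S1 hcov1 hsub1 hdis1
  have h2 := pendLift_good G Uin Uex S2 hcov2 hsub2 hdis2
  have he1 : pendLift S1 = C := hUniq _ ⟨h1.1, h1.2.1, h1.2.2⟩
  have he2 : pendLift S2 = C := hUniq _ ⟨h2.1, h2.2.1, h2.2.2⟩
  have heq : pendLift S1 = pendLift S2 := he1.trans he2.symm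
  have hv1 : Sum.inl v ∈ pendLift S1 := by
    rw [mem_pendLift_inl]
    simpa [hS1] using hvex
  rw [heq, mem_pendLift_inl] at hv1
  exact (Finset.notMem_erase v S1) hv1
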